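/- arXiv:2209.02228 — 3 statements merged into one kernel-verified Lean document; each statement's English description precedes it below -/
import Mathlib

section
/- If 2^{-(i+1)} < p_s < 2^{-i}, L = 2^R, and L_s = L·p_s (assumed to be a positive integer), then for every state x ∈ {2^R, ..., 2^{R+1}-1}, the encoding length k_s(x) = ⌊log₂(x / L_s)⌋ belongs to the set {i, i+1}. -/
/-- If `2^{-(i+1)} < p_s < 2^{-i}`, `L = 2^R`, and `L_s = L * p_s` is a positive integer,
then for every state `x ∈ {2^R, …, 2^{R+1}-1}` the encoding length
`⌊log₂ (x / L_s)⌋` belongs to `{i, i+1}`. -/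
theorem stmt1 (i R : ℕ) (p : ℝ) (Ls : ℕ) (hLspos : 0 < Ls)
    (hLs : (Ls : ℝ) = (2:ℝ) ^ R * p)
    (h1 : (2:ℝ) ^ (-((i:ℤ) + 1)) < p) (h2 : p < (2:ℝ) ^ (-(i:ℤ)))
    (x : ℕ) (hx1 : 2 ^ R ≤ x) (hx2 : x ≤ 2 ^ (R + 1) - 1) :
    ⌊Real.logb 2 ((x : ℝ) / (Ls : ℝ))⌋ = (i : ℤ) ∨
      ⌊Real.logb 2 ((x : ℝ) / (Ls : ℝ))⌋ = (i : ℤ) + 1 := by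
  have hLsR : (0:ℝ) < (Ls:ℝ) := by exact_mod_cast hLspos
  have hA : (2:ℝ) ^ (-((i:ℤ) + 1)) = ((2:ℝ) ^ (i+1))⁻¹ := by
    rw [show -((i:ℤ)+1) = -((i+1:ℕ):ℤ) by push_cast; ring, zpow_neg, zpow_natCast]
  have hB : (2:ℝ) ^ (-(i:ℤ)) = ((2:ℝ) ^ i)⁻¹ := by
    rw [zpow_neg, zpow_natCast]
  have hp1 : (1:ℝ) < p * 2 ^ (i+1) := by
    rw [hA] at h1
    have hpow : (0:ℝ) < 2 ^ (i+1) := by positivity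
    calc (1:ℝ) = ((2:ℝ)^(i+1))⁻¹ * 2^(i+1) := by field_simp
      _ < p * 2^(i+1) := by exact mul_lt_mul_of_pos_right h1 hpow
  have hp2 : p * 2 ^ i < 1 := by
    rw [hB] at h2
    have hpow : (0:ℝ) < 2 ^ i := by positivity
    calc p * 2^i < ((2:ℝ)^i)⁻¹ * 2^i := mul_lt_mul_of_pos_right h2 hpow
      _ = 1 := by field_simp
  have hxR : (2:ℝ) ^ R ≤ (x:ℝ) := by exact_mod_cast hx1
  have hxpos : (0:ℝ) < (x:ℝ) := lt_of_lt_of_le (by positivity) hxR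
  have hxlt : (x:ℝ) < 2 ^ (R+1) := by
    have hp : 0 < 2 ^ (R+1) := Nat.pow_pos (by norm_num)
    have : x < 2 ^ (R+1) := by omega
    exact_mod_cast this
  have hLow : (Ls:ℝ) * 2 ^ i < 2 ^ R := by
    rw [hLs]
    have : (2:ℝ)^R * p * 2^i = 2^R * (p * 2^i) := by ring
    rw [this]
    nlinarith [pow_pos (show (0:ℝ) < 2 by norm_num) R]
  have hHigh : (2:ℝ) ^ (R+1) < (Ls:ℝ) * 2 ^ (i+2) := by
    rw [hLs]
    have h2R : (0:ℝ) < 2 ^ R := by positivity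
    have e1 : (2:ℝ)^(R+1) = 2^R * 2 := by ring
    have e2 : (2:ℝ)^R * p * 2^(i+2) = 2^R * (p * 2^(i+1)) * 2 := by ring
    rw [e1, e2]
    nlinarith
  have hy1 : (2:ℝ) ^ i < (x:ℝ) / Ls := by
    rw [lt_div_iff₀ hLsR]
    calc (2:ℝ)^i * Ls = Ls * 2^i := by ring
      _ < 2^R := hLow
      _ ≤ x := hxR
  have hy2 : (x:ℝ) / Ls < 2 ^ (i+2) := by
    rw [div_lt_iff₀ hLsR]
    calc (x:ℝ) < 2^(R+1) := hxlt
      _ < Ls * 2^(i+2) := hHigh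
      _ = 2^(i+2) * Ls := by ring
  have hypos : (0:ℝ) < (x:ℝ) / Ls := by positivity
  have hlog1 : (i:ℝ) < Real.logb 2 ((x:ℝ) / Ls) := by
    rw [Real.lt_logb_iff_rpow_lt (by norm_num) hypos, Real.rpow_natCast]
    exact hy1
  have hlog2 : Real.logb 2 ((x:ℝ) / Ls) < (i:ℝ) + 2 := by
    rw [Real.logb_lt_iff_lt_rpow (by norm_num) hypos,
      show (i:ℝ) + 2 = ((i+2:ℕ):ℝ) by push_cast; ring, Real.rpow_natCast]
    exact hy2
  have hf1 : (i:ℤ) ≤ ⌊Real.logb 2 ((x:ℝ) / Ls)⌋ := by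
    apply Int.le_floor.mpr
    push_cast
    exact le_of_lt hlog1
  have hf2 : ⌊Real.logb 2 ((x:ℝ) / Ls)⌋ < (i:ℤ) + 2 := by
    apply Int.floor_lt.mpr
    push_cast
    exact hlog2
  omega
end

section
/- Suppose every symbol probability is a natural power of 1/2, i.e. p_s = 2^{-i_s} with Σ_s 2^{-i_s} = 1, and ANS is built with L = 2^R states where R ≥ max_s i_s and L_s = 2^{R - i_s}. Then for any distribution of states, the average encoding length Σ_s p_s · Σ_x π(x) k_s(x) equals the source entropy H = Σ_s p_s · i_s, for any probability distribution π on states. In particular ANS is optimal for such sources. -/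
lemma floor_logb_eq (R k x : ℕ) (hk : k ≤ R)
    (hx1 : 2 ^ R ≤ x) (hx2 : x ≤ 2 ^ (R + 1) - 1) :
    ⌊Real.logb 2 ((x : ℝ) / ((2 ^ (R - k) : ℕ) : ℝ))⌋ = (k : ℤ) := by
  have hpos : (0:ℝ) < (2 ^ (R - k) : ℕ) := by positivity
  have hxpos : (0:ℝ) < x := by
    have : 0 < x := lt_of_lt_of_le (Nat.pow_pos (n := R) (by norm_num)) hx1
    exact_mod_cast this
  have hypos : (0:ℝ) < (x : ℝ) / ((2 ^ (R - k) : ℕ) : ℝ) := by positivity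
  have hlow : (2:ℝ) ^ k ≤ (x : ℝ) / ((2 ^ (R - k) : ℕ) : ℝ) := by
    rw [le_div_iff₀ hpos]
    push_cast
    rw [← pow_add]
    have : k + (R - k) = R := by omega
    rw [this]
    exact_mod_cast hx1
  have hhigh : (x : ℝ) / ((2 ^ (R - k) : ℕ) : ℝ) < (2:ℝ) ^ (k + 1) := by
    rw [div_lt_iff₀ hpos]
    push_cast
    rw [← pow_add]
    have h : k + 1 + (R - k) = R + 1 := by omega
    rw [h]
    have : x < 2 ^ (R + 1) := by
      have := Nat.pow_pos (n := R+1) (show 0 < 2 by norm_num)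
      omega
    exact_mod_cast this
  rw [Int.floor_eq_iff]
  constructor
  · rw [Real.le_logb_iff_rpow_le (by norm_num) hypos]
    push_cast
    rw [Real.rpow_natCast]
    exact_mod_cast hlow
  · rw [Real.logb_lt_iff_lt_rpow (by norm_num) hypos]
    push_cast
    rw [show ((k:ℝ) + 1) = ((k + 1 : ℕ) : ℝ) by push_cast; ring, Real.rpow_natCast]
    exact_mod_cast hhigh

/-- If every symbol probability is a natural power of `1/2`, i.e. `p_s = 2^{-i_s}` with
`∑ 2^{-i_s} = 1`, `R ≥ max i_s` and `L_s = 2^{R - i_s}`, then for any probability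
distribution `π` on the states the average encoding length equals the entropy
`∑ p_s · i_s`. -/
theorem stmt3 {α : Type*} (S : Finset α) (i : α → ℕ) (R : ℕ)
    (hR : ∀ s ∈ S, i s ≤ R)
    (hsum : ∑ s ∈ S, (2:ℝ) ^ (-(i s : ℤ)) = 1)
    (π : ℕ → ℝ) (hπ0 : ∀ x, 0 ≤ π x)
    (hπ1 : ∑ x ∈ Finset.Icc (2 ^ R) (2 ^ (R + 1) - 1), π x = 1) :
    ∑ s ∈ S, (2:ℝ) ^ (-(i s : ℤ)) *
        ∑ x ∈ Finset.Icc (2 ^ R) (2 ^ (R + 1) - 1),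
          π x * (⌊Real.logb 2 ((x : ℝ) / ((2 ^ (R - i s) : ℕ) : ℝ))⌋ : ℝ)
      = ∑ s ∈ S, (2:ℝ) ^ (-(i s : ℤ)) * (i s : ℝ) := by
  refine Finset.sum_congr rfl fun s hs => ?_
  congr 1
  have : ∀ x ∈ Finset.Icc (2 ^ R) (2 ^ (R + 1) - 1),
      π x * (⌊Real.logb 2 ((x : ℝ) / ((2 ^ (R - i s) : ℕ) : ℝ))⌋ : ℝ) = π x * (i s : ℝ) := by
    intro x hx
    rw [Finset.mem_Icc] at hx
    rw [floor_logb_eq R (i s) x (hR s hs) hx.1 hx.2]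
    norm_num
  rw [Finset.sum_congr rfl this, ← Finset.sum_mul, hπ1, one_mul]
end

section
/- The ANS encoding and decoding functions are mutually inverse: if C(s,y) = x is the bijection from pairs (s,y) with y ∈ {L_s, ..., 2L_s - 1} onto the state set 𝕀 (determined by a symbol spread), and D = C^{-1}, then one encoding step followed by one decoding step recovers the original state and symbol: for any state x ∈ 𝕀 and symbol s, writing k = ⌊log₂(x/L_s)⌋, b = x mod 2^k, x' = C(s, ⌊x/2^k⌋), we have D(x') = (s, ⌊x/2^k⌋) and 2^k·⌊x/2^k⌋ + b = x. -/
/-- The real floor-log matches the natural log for quotients of naturals. -/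
lemma floor_logb_eq_natLog (x L : ℕ) (hL : 1 ≤ L) (hx : L ≤ x) :
    (⌊Real.logb 2 ((x : ℝ) / (L : ℝ))⌋).toNat = Nat.log 2 (x / L) := by
  have hL0 : 0 < L := hL
  have hx0 : 0 < x := lt_of_lt_of_le hL0 hx
  have hq : 0 < x / L := Nat.one_le_div_iff hL0 |>.2 hx
  set m := Nat.log 2 (x / L) with hm
  have h1 : 2 ^ m ≤ x / L := Nat.pow_log_le_self 2 hq.ne'
  have h2 : x / L < 2 ^ (m + 1) := Nat.lt_pow_succ_log_self one_lt_two _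
  have h1' : 2 ^ m * L ≤ x := (Nat.le_div_iff_mul_le hL0).1 h1
  have h2' : x < 2 ^ (m + 1) * L := (Nat.div_lt_iff_lt_mul hL0).1 h2
  have hLpos : (0 : ℝ) < (L : ℝ) := by exact_mod_cast hL0
  have hxpos : (0 : ℝ) < (x : ℝ) / (L : ℝ) := by positivity
  have hfloor : ⌊Real.logb 2 ((x : ℝ) / (L : ℝ))⌋ = (m : ℤ) := by
    rw [Int.floor_eq_iff]
    constructor
    · rw [Real.le_logb_iff_rpow_le one_lt_two hxpos]
      rw [show ((m : ℤ) : ℝ) = ((m : ℕ) : ℝ) by push_cast; ring,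
        Real.rpow_natCast, le_div_iff₀ hLpos]
      exact_mod_cast h1'
    · rw [Real.logb_lt_iff_lt_rpow one_lt_two hxpos]
      rw [show ((m : ℤ) : ℝ) + 1 = ((m + 1 : ℕ) : ℝ) by push_cast; ring,
        Real.rpow_natCast, div_lt_iff₀ hLpos]
      exact_mod_cast h2'
  rw [hfloor]; simp

/-- One ANS encoding step followed by one decoding step recovers the original state and
symbol: if `D` inverts `C` on its domain, then for any state `x ∈ {L, …, 2L-1}` and any
symbol `s`, with `k = ⌊log₂(x/L_s)⌋`, `b = x mod 2^k` and `x' = C(s, ⌊x/2^k⌋)`, the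
intermediate value `⌊x/2^k⌋` lies in `{L_s, …, 2L_s - 1}`, `D x' = (s, ⌊x/2^k⌋)` and
`2^k·⌊x/2^k⌋ + b = x`. -/
theorem stmt13 {α : Type*} (R : ℕ) (Ls : α → ℕ)
    (C : α → ℕ → ℕ) (D : ℕ → α × ℕ)
    (hDC : ∀ s y, Ls s ≤ y → y ≤ 2 * Ls s - 1 → D (C s y) = (s, y))
    (s : α) (hLs1 : 1 ≤ Ls s) (hLs2 : Ls s ≤ 2 ^ R)
    (x : ℕ) (hx1 : 2 ^ R ≤ x) (hx2 : x ≤ 2 * 2 ^ R - 1) :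
    let k : ℕ := (⌊Real.logb 2 ((x : ℝ) / (Ls s : ℝ))⌋).toNat
    Ls s ≤ x / 2 ^ k ∧ x / 2 ^ k ≤ 2 * Ls s - 1 ∧
      D (C s (x / 2 ^ k)) = (s, x / 2 ^ k) ∧
      2 ^ k * (x / 2 ^ k) + x % 2 ^ k = x := by
  intro k
  have hLx : Ls s ≤ x := le_trans hLs2 hx1
  have hk : k = Nat.log 2 (x / Ls s) := floor_logb_eq_natLog x (Ls s) hLs1 hLx
  have hL0 : 0 < Ls s := hLs1
  have hq : 0 < x / Ls s := Nat.one_le_div_iff hL0 |>.2 hLx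
  have h1 : 2 ^ k ≤ x / Ls s := hk ▸ Nat.pow_log_le_self 2 hq.ne'
  have h2 : x / Ls s < 2 ^ (k + 1) := hk ▸ Nat.lt_pow_succ_log_self one_lt_two _
  have h1' : 2 ^ k * Ls s ≤ x := (Nat.le_div_iff_mul_le hL0).1 h1
  have h2' : x < 2 ^ (k + 1) * Ls s := (Nat.div_lt_iff_lt_mul hL0).1 h2
  have hpow : 0 < 2 ^ k := Nat.pow_pos (by norm_num)
  have hA : Ls s ≤ x / 2 ^ k := by
    rw [Nat.le_div_iff_mul_le hpow]; linarith [h1']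
  have hB : x / 2 ^ k ≤ 2 * Ls s - 1 := by
    have : x / 2 ^ k < 2 * Ls s := by
      rw [Nat.div_lt_iff_lt_mul hpow]
      calc x < 2 ^ (k + 1) * Ls s := h2'
        _ = 2 * Ls s * 2 ^ k := by ring
    omega
  exact ⟨hA, hB, hDC s _ hA hB, Nat.div_add_mod x (2 ^ k)⟩
end
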